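/- Assume hypotheses (H1)–(H3) for a smooth Hamiltonian H on the slow–fast phase space M = ℝ^{2r} × ℝ^{2k}, with momentum map J satisfying the adiabatic condition ⟨d₁J⟩ = 0. Then the identity (1/ω) d₁H − d₁J = (1/ω)⟨d₁H⟩ holds between 1-forms on M. -/

import Mathlib

open Real MeasureTheory Asymptotics Set

noncomputable section

/-- Fast factor `ℝ^{2r}` with variables `(y, x)`. -/
abbrev Fast (r : ℕ) := (Fin r → ℝ) × (Fin r → ℝ)

/-- Slow factor `ℝ^{2k}` with variables `(p, q)`. -/
abbrev Slow (k : ℕ) := (Fin k → ℝ) × (Fin k → ℝ)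

/-- The slow-fast phase space `M = ℝ^{2r} × ℝ^{2k}`. -/
abbrev SF (r k : ℕ) := Fast r × Slow k

/-- The fast Hamiltonian vector field `X_H^{(0)}`: `ẏ = -∂H/∂x`, `ẋ = ∂H/∂y`,
zero slow components. -/
def fastVF {r k : ℕ} (H : SF r k → ℝ) (m : SF r k) : SF r k :=
  ((fun i => -(fderiv ℝ H m ((0, Pi.single i 1), 0)),
    fun i => fderiv ℝ H m ((Pi.single i 1, 0), 0)), 0)

/-- The slow Hamiltonian vector field `X_H^{(1)}`: `ṗ = -∂H/∂q`, `q̇ = ∂H/∂p`,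
zero fast components. -/
def slowVF {r k : ℕ} (H : SF r k → ℝ) (m : SF r k) : SF r k :=
  (0, (fun j => -(fderiv ℝ H m (0, (0, Pi.single j 1))),
       fun j => fderiv ℝ H m (0, (Pi.single j 1, 0))))

/-- The differential of `f` in the slow variables only, `d₁f`, as a 1-form. -/
def d1Form {r k : ℕ} (f : SF r k → ℝ) (m w : SF r k) : ℝ :=
  fderiv ℝ f m ((0 : Fast r), w.2)

/-- Average `⟨α⟩` of a 1-form `α` along a `2π`-periodic flow `φ`:
`⟨α⟩_m(w) = (1/2π)∫₀^{2π} α_{φ(t,m)}(D_mφ(t,·) w) dt`. -/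
def avg1 {r k : ℕ} (φ : ℝ → SF r k → SF r k) (α : SF r k → SF r k → ℝ)
    (m w : SF r k) : ℝ :=
  (1 / (2 * π)) * ∫ t in (0:ℝ)..(2 * π), α (φ t m) (fderiv ℝ (φ t) m w)

/-- Integrating operator `S(α)` on a 1-form `α` along a `2π`-periodic flow `φ`. -/
def intOp1 {r k : ℕ} (φ : ℝ → SF r k → SF r k) (α : SF r k → SF r k → ℝ)
    (m w : SF r k) : ℝ :=
  (1 / (2 * π)) * ∫ t in (0:ℝ)..(2 * π), (t - π) * α (φ t m) (fderiv ℝ (φ t) m w)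

lemma constOfDeriv {F : Type*} [NormedAddCommGroup F] [NormedSpace ℝ F]
    {f : ℝ → F} (h : ∀ t, HasDerivAt f 0 t) (s t : ℝ) : f s = f t := by
  refine is_const_of_fderiv_eq_zero (𝕜 := ℝ) (fun x => (h x).differentiableAt) (fun x => ?_) s t
  have h2 := (h x).hasFDerivAt.fderiv
  rw [h2]
  ext t
  simp

lemma pi_decomp {r : ℕ} (T : (Fin r → ℝ) →L[ℝ] ℝ) (a : Fin r → ℝ) :
    T a = ∑ i, a i * T (Pi.single i 1) := by
  have ha : a = ∑ i, a i • (Pi.single i 1 : Fin r → ℝ) := by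
    funext j
    simp [Pi.single_apply, Finset.sum_apply, mul_ite, Finset.sum_ite_eq]
  calc T a = T (∑ i, a i • (Pi.single i 1 : Fin r → ℝ)) := by rw [← ha]
  _ = ∑ i, a i * T (Pi.single i 1) := by
      rw [map_sum]
      exact Finset.sum_congr rfl fun i _ => by rw [_root_.map_smul]; rfl

lemma clm_fast_decomp {r k : ℕ} (L : SF r k →L[ℝ] ℝ) (u : Fast r) :
    L (u, (0 : Slow k)) = (∑ i, u.1 i * L ((Pi.single i 1, 0), 0))
      + ∑ i, u.2 i * L ((0, Pi.single i 1), 0) := by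
  have hsplit : ((u, (0 : Slow k)) : SF r k)
      = (((u.1, 0), 0) : SF r k) + (((0, u.2), 0) : SF r k) := by
    refine Prod.ext (Prod.ext ?_ ?_) ?_ <;> simp
  rw [hsplit, map_add]
  congr 1
  · let T : (Fin r → ℝ) →L[ℝ] ℝ := L.comp ((ContinuousLinearMap.inl ℝ (Fast r) (Slow k)).comp
      (ContinuousLinearMap.inl ℝ (Fin r → ℝ) (Fin r → ℝ)))
    have hT : ∀ a, T a = L ((a, 0), 0) := fun a => rfl
    rw [← hT, pi_decomp]
    exact Finset.sum_congr rfl fun i _ => by rw [hT]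
  · let T : (Fin r → ℝ) →L[ℝ] ℝ := L.comp ((ContinuousLinearMap.inl ℝ (Fast r) (Slow k)).comp
      (ContinuousLinearMap.inr ℝ (Fin r → ℝ) (Fin r → ℝ)))
    have hT : ∀ a, T a = L ((0, a), 0) := fun a => rfl
    rw [← hT, pi_decomp]
    exact Finset.sum_congr rfl fun i _ => by rw [hT]

lemma dH_fastVF_zero {r k : ℕ} (H : SF r k → ℝ) (m : SF r k) :
    fderiv ℝ H m (fastVF H m) = 0 := by
  have h : fastVF H m = ((fastVF H m).1, (0 : Slow k)) := rfl
  rw [h, clm_fast_decomp]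
  have : ∀ i : Fin r, (fastVF H m).1.1 i * fderiv ℝ H m ((Pi.single i 1, 0), 0)
      + (fastVF H m).1.2 i * fderiv ℝ H m ((0, Pi.single i 1), 0) = 0 := by
    intro i
    simp only [fastVF]
    ring
  rw [← Finset.sum_add_distrib] at *
  rw [Finset.sum_eq_zero fun i _ => this i]

lemma winv_fderiv_fastVF_zero {r k : ℕ} {H ω J : SF r k → ℝ}
    (hH : ContDiff ℝ (⊤ : ℕ∞) H) (hω : ContDiff ℝ (⊤ : ℕ∞) ω) (hω_pos : ∀ m, 0 < ω m)
    (hJ : ContDiff ℝ (⊤ : ℕ∞) J)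
    (hH2 : ∀ m (u : Fast r),
      fderiv ℝ J m (u, (0 : Slow k)) = (1 / ω m) * fderiv ℝ H m (u, 0))
    (m : SF r k) :
    fderiv ℝ (fun x => (ω x)⁻¹) m (fastVF H m) = 0 := by
  have h1le : (1 : WithTop ℕ∞) ≤ ((⊤ : ℕ∞) : WithTop ℕ∞) := by exact_mod_cast le_top
  have htle : ((⊤ : ℕ∞) : WithTop ℕ∞) + 1 ≤ ((⊤ : ℕ∞) : WithTop ℕ∞) := by exact_mod_cast le_top
  set W : SF r k → ℝ := fun x => (ω x)⁻¹ with hW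
  have hωne : ∀ x, ω x ≠ 0 := fun x => (hω_pos x).ne'
  have hWsm : ContDiff ℝ (⊤ : ℕ∞) W := hω.inv hωne
  set W' := fderiv ℝ W m with hW'
  set D2J := fderiv ℝ (fderiv ℝ J) m with hD2J
  set D2H := fderiv ℝ (fderiv ℝ H) m with hD2H
  -- symmetry of second derivatives
  have hJd : ∀ y, HasFDerivAt J (fderiv ℝ J y) y :=
    fun y => ((hJ.differentiable (ne_of_gt (lt_of_lt_of_le zero_lt_one h1le))) y).hasFDerivAt
  have hHd : ∀ y, HasFDerivAt H (fderiv ℝ H y) y :=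
    fun y => ((hH.differentiable (ne_of_gt (lt_of_lt_of_le zero_lt_one h1le))) y).hasFDerivAt
  have hD2Jd : HasFDerivAt (fderiv ℝ J) D2J m :=
    (((hJ.fderiv_right htle).differentiable (ne_of_gt (lt_of_lt_of_le zero_lt_one h1le))) m).hasFDerivAt
  have hD2Hd : HasFDerivAt (fderiv ℝ H) D2H m :=
    (((hH.fderiv_right htle).differentiable (ne_of_gt (lt_of_lt_of_le zero_lt_one h1le))) m).hasFDerivAt
  have symmJ : ∀ v w : SF r k, D2J v w = D2J w v := second_derivative_symmetric hJd hD2Jd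
  have symmH : ∀ v w : SF r k, D2H v w = D2H w v := second_derivative_symmetric hHd hD2Hd
  have hW'd : HasFDerivAt W W' m := ((hWsm.differentiable (ne_of_gt (lt_of_lt_of_le zero_lt_one h1le))) m).hasFDerivAt
  -- equation E
  have E : ∀ u u' : Fast r,
      D2J ((u', 0) : SF r k) ((u, 0) : SF r k)
        = W m * D2H ((u', 0) : SF r k) ((u, 0) : SF r k)
          + fderiv ℝ H m ((u, 0) : SF r k) * W' ((u', 0) : SF r k) := by
    intro u u'
    have hgJ : HasFDerivAt (fun x => fderiv ℝ J x (((u, 0) : SF r k)))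
        (D2J.flip ((u, 0) : SF r k)) m := by
      have h := hD2Jd.clm_apply (hasFDerivAt_const (((u, 0) : SF r k)) m)
      simpa using h
    have hgH : HasFDerivAt (fun x => fderiv ℝ H x (((u, 0) : SF r k)))
        (D2H.flip ((u, 0) : SF r k)) m := by
      have h := hD2Hd.clm_apply (hasFDerivAt_const (((u, 0) : SF r k)) m)
      simpa using h
    have hprod : HasFDerivAt (fun x => W x * fderiv ℝ H x (((u, 0) : SF r k)))
        (W m • D2H.flip ((u, 0) : SF r k) + fderiv ℝ H m ((u, 0) : SF r k) • W') m :=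
      hW'd.mul hgH
    have heq : (fun x => fderiv ℝ J x (((u, 0) : SF r k)))
        = fun x => W x * fderiv ℝ H x (((u, 0) : SF r k)) := by
      funext x
      rw [hH2 x u, one_div]
    rw [heq] at hgJ
    have huniq := hgJ.unique hprod
    have := congrArg (fun T : SF r k →L[ℝ] ℝ => T (((u', 0) : SF r k))) huniq
    simpa [smul_eq_mul, mul_comm] using this
  -- the exchange identity
  have key : ∀ u u' : Fast r,
      fderiv ℝ H m ((u, 0) : SF r k) * W' ((u', 0) : SF r k)
        = fderiv ℝ H m ((u', 0) : SF r k) * W' ((u, 0) : SF r k) := by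
    intro u u'
    have e1 := E u u'
    have e2 := E u' u
    rw [symmJ ((u', 0) : SF r k) ((u, 0) : SF r k),
        symmH ((u', 0) : SF r k) ((u, 0) : SF r k)] at e1
    linarith
  by_cases hall : ∀ u : Fast r, fderiv ℝ H m ((u, 0) : SF r k) = 0
  · have hz : fastVF H m = 0 := by
      have h1 : (fun i : Fin r => -(fderiv ℝ H m ((0, Pi.single i 1), 0)))
          = fun _ => (0 : ℝ) := by
        funext i; rw [hall ((0 : Fin r → ℝ), Pi.single i 1)]; ring
      have h2 : (fun i : Fin r => fderiv ℝ H m ((Pi.single i 1, 0), 0))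
          = fun _ => (0 : ℝ) := by
        funext i; rw [hall ((Pi.single i 1 : Fin r → ℝ), 0)]
      simp only [fastVF, h1, h2]
      rfl
    rw [hz, map_zero]
  · push_neg at hall
    obtain ⟨u, hu⟩ := hall
    have h0 : fderiv ℝ H m (((fastVF H m).1, 0) : SF r k) = 0 := dH_fastVF_zero H m
    have hk := key u (fastVF H m).1
    rw [h0, zero_mul] at hk
    have : W' (((fastVF H m).1, 0) : SF r k) = 0 := by
      rcases mul_eq_zero.mp hk with h | h
      · exact absurd h hu
      · exact h
    exact this

/-- Under hypotheses (H1)-(H3), the identity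
`(1/ω) d₁H - d₁J = (1/ω)⟨d₁H⟩` holds between 1-forms on `M`. -/
theorem stmt6 {r k : ℕ} (H : SF r k → ℝ) (hH : ContDiff ℝ (⊤ : ℕ∞) H)
    (ω : SF r k → ℝ) (hω_smooth : ContDiff ℝ (⊤ : ℕ∞) ω) (hω_pos : ∀ m, 0 < ω m)
    (φ : ℝ → SF r k → SF r k)
    (hφ_smooth : ContDiff ℝ (⊤ : ℕ∞) (fun p : ℝ × SF r k => φ p.1 p.2))
    (hφ0 : ∀ m, φ 0 m = m)
    (hφ' : ∀ t m, HasDerivAt (fun s => φ s m) ((ω (φ t m))⁻¹ • fastVF H (φ t m)) t)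
    (hper : ∀ t m, φ (t + 2 * π) m = φ t m)
    (J : SF r k → ℝ) (hJ_smooth : ContDiff ℝ (⊤ : ℕ∞) J)
    (hH2 : ∀ m (u : Fast r),
      fderiv ℝ J m (u, (0 : Slow k)) = (1 / ω m) * fderiv ℝ H m (u, 0))
    (hH3 : ∀ m w, avg1 φ (d1Form J) m w = 0) :
    ∀ m w, (1 / ω m) * d1Form H m w - d1Form J m w =
      (1 / ω m) * avg1 φ (d1Form H) m w := by

  have h1le : (1 : WithTop ℕ∞) ≤ ((⊤ : ℕ∞) : WithTop ℕ∞) := by exact_mod_cast le_top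
  have hωne : ∀ x, ω x ≠ 0 := fun x => (hω_pos x).ne'
  have hφt : ∀ t : ℝ, ContDiff ℝ (⊤ : ℕ∞) (φ t) :=
    fun t => hφ_smooth.comp (contDiff_const.prodMk contDiff_id)
  -- invariance of scalar functions whose differential kills the fast vector field
  have inv_of : ∀ f : SF r k → ℝ, ContDiff ℝ (⊤ : ℕ∞) f →
      (∀ x, fderiv ℝ f x (fastVF H x) = 0) → ∀ t x, f (φ t x) = f x := by
    intro f hf hf0 t x
    have h0 : ∀ s : ℝ, HasDerivAt (fun τ => f (φ τ x)) 0 s := by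
      intro s
      have hd := ((hf.differentiable (ne_of_gt (lt_of_lt_of_le zero_lt_one h1le))) (φ s x)).hasFDerivAt.comp_hasDerivAt s (hφ' s x)
      convert hd using 1
      show (0 : ℝ) = fderiv ℝ f (φ s x) ((ω (φ s x))⁻¹ • fastVF H (φ s x))
      rw [_root_.map_smul, hf0, smul_zero]
      all_goals rfl
    have h := constOfDeriv h0 t 0
    simpa [hφ0] using h
  have hJinv : ∀ t x, J (φ t x) = J x := by
    refine inv_of J hJ_smooth (fun x => ?_)
    calc fderiv ℝ J x (fastVF H x)
        = fderiv ℝ J x (((fastVF H x).1, 0) : SF r k) := rfl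
      _ = (1 / ω x) * fderiv ℝ H x (((fastVF H x).1, 0) : SF r k) := hH2 x (fastVF H x).1
      _ = (1 / ω x) * fderiv ℝ H x (fastVF H x) := rfl
      _ = 0 := by rw [dH_fastVF_zero, mul_zero]
  have hHinv : ∀ t x, H (φ t x) = H x := inv_of H hH (fun x => dH_fastVF_zero H x)
  have hWinv : ∀ t x, (ω (φ t x))⁻¹ = (ω x)⁻¹ :=
    inv_of (fun x => (ω x)⁻¹) (hω_smooth.inv hωne)
      (fun x => winv_fderiv_fastVF_zero hH hω_smooth hω_pos hJ_smooth hH2 x)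
  have hωinv : ∀ t x, ω (φ t x) = ω x := fun t x => inv_injective (hWinv t x)
  -- slow variables are invariant
  have hslow : ∀ t x, (φ t x).2 = x.2 := by
    intro t x
    have h0 : ∀ s : ℝ, HasDerivAt (fun τ => (φ τ x).2) 0 s := by
      intro s
      have hd := (ContinuousLinearMap.snd ℝ (Fast r) (Slow k)).hasFDerivAt.comp_hasDerivAt
        s (hφ' s x)
      convert hd using 1
      show (0 : Slow k) = ((ω (φ s x))⁻¹ • fastVF H (φ s x)).2
      rw [Prod.smul_snd]
      show (0 : Slow k) = (ω (φ s x))⁻¹ • (0 : Slow k)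
      rw [smul_zero]
      all_goals rfl
    have h := constOfDeriv h0 t 0
    simpa [hφ0] using h
  -- the slow part of the linearized flow is the identity
  have hDsnd : ∀ t x (v : SF r k), (fderiv ℝ (φ t) x v).2 = v.2 := by
    intro t x v
    have hφtd : HasFDerivAt (φ t) (fderiv ℝ (φ t) x) x :=
      (((hφt t).differentiable (ne_of_gt (lt_of_lt_of_le zero_lt_one h1le))) x).hasFDerivAt
    have h1 : HasFDerivAt (fun y => (φ t y).2)
        ((ContinuousLinearMap.snd ℝ (Fast r) (Slow k)).comp (fderiv ℝ (φ t) x)) x :=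
      (ContinuousLinearMap.snd ℝ (Fast r) (Slow k)).hasFDerivAt.comp x hφtd
    have h2 : (fun y : SF r k => (φ t y).2) = fun y : SF r k => y.2 :=
      funext fun y => hslow t y
    rw [h2] at h1
    have h3 := h1.unique (ContinuousLinearMap.snd ℝ (Fast r) (Slow k)).hasFDerivAt
    calc (fderiv ℝ (φ t) x v).2
        = ((ContinuousLinearMap.snd ℝ (Fast r) (Slow k)).comp (fderiv ℝ (φ t) x)) v := rfl
      _ = v.2 := by rw [h3]; rfl
  -- chain rule for invariant functions
  have hchain : ∀ f : SF r k → ℝ, ContDiff ℝ (⊤ : ℕ∞) f → (∀ t x, f (φ t x) = f x) →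
      ∀ t x (v : SF r k), fderiv ℝ f x v = fderiv ℝ f (φ t x) (fderiv ℝ (φ t) x v) := by
    intro f hf hfinv t x v
    have hφtd : HasFDerivAt (φ t) (fderiv ℝ (φ t) x) x :=
      (((hφt t).differentiable (ne_of_gt (lt_of_lt_of_le zero_lt_one h1le))) x).hasFDerivAt
    have h1 : HasFDerivAt (fun y => f (φ t y))
        ((fderiv ℝ f (φ t x)).comp (fderiv ℝ (φ t) x)) x :=
      ((hf.differentiable (ne_of_gt (lt_of_lt_of_le zero_lt_one h1le))) (φ t x)).hasFDerivAt.comp x hφtd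
    rw [show (fun y => f (φ t y)) = f from funext fun y => hfinv t y] at h1
    have h2 := ((hf.differentiable (ne_of_gt (lt_of_lt_of_le zero_lt_one h1le))) x).hasFDerivAt.unique h1
    rw [h2]; rfl
  intro m w
  set v : SF r k := ((0 : Fast r), w.2) with hv
  set A : ℝ → ℝ := fun t => fderiv ℝ J (φ t m) v with hA
  set B : ℝ → ℝ := fun t => fderiv ℝ H (φ t m) v with hB
  have hA0 : A 0 = fderiv ℝ J m v := by rw [hA]; simp [hφ0]
  have hB0 : B 0 = fderiv ℝ H m v := by rw [hB]; simp [hφ0]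
  -- the pointwise identity (★)
  have star : ∀ t, A t = fderiv ℝ J m v - (1 / ω m) * (fderiv ℝ H m v - B t) := by
    intro t
    have hJc := hchain J hJ_smooth hJinv t m v
    have hHc := hchain H hH hHinv t m v
    set P : SF r k := fderiv ℝ (φ t) m v with hP
    have hPsnd : P.2 = w.2 := by rw [hP, hDsnd]
    have hPsplit : P = ((P.1, (0 : Slow k)) : SF r k) + (((0 : Fast r), w.2) : SF r k) := by
      refine Prod.ext ?_ ?_
      · show P.1 = P.1 + 0; rw [add_zero]
      · show P.2 = 0 + w.2; rw [zero_add, hPsnd]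
    rw [hPsplit, map_add] at hJc hHc
    rw [hH2 (φ t m) P.1, hωinv t m] at hJc
    have hAt : A t = fderiv ℝ J (φ t m) (((0 : Fast r), w.2) : SF r k) := rfl
    have hBt : B t = fderiv ℝ H (φ t m) (((0 : Fast r), w.2) : SF r k) := rfl
    rw [← hAt] at hJc
    rw [← hBt] at hHc
    rw [hJc, hHc]
    ring
  -- continuity of the integrands
  have hcφ : Continuous fun t => φ t m :=
    hφ_smooth.continuous.comp (continuous_id.prodMk continuous_const)
  have hcB : Continuous B :=
    ((hH.continuous_fderiv (ne_of_gt (lt_of_lt_of_le zero_lt_one h1le))).comp hcφ).clm_apply continuous_const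
  have hcA : Continuous A :=
    ((hJ_smooth.continuous_fderiv (ne_of_gt (lt_of_lt_of_le zero_lt_one h1le))).comp hcφ).clm_apply continuous_const
  -- identification of the averages
  have havgH : avg1 φ (d1Form H) m w = (1 / (2 * π)) * ∫ t in (0:ℝ)..(2 * π), B t := by
    unfold avg1
    congr 1
    refine intervalIntegral.integral_congr fun t _ => ?_
    show fderiv ℝ H (φ t m) ((0 : Fast r), (fderiv ℝ (φ t) m w).2) = B t
    rw [hDsnd t m w]
  have havgJ : avg1 φ (d1Form J) m w = (1 / (2 * π)) * ∫ t in (0:ℝ)..(2 * π), A t := by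
    unfold avg1
    congr 1
    refine intervalIntegral.integral_congr fun t _ => ?_
    show fderiv ℝ J (φ t m) ((0 : Fast r), (fderiv ℝ (φ t) m w).2) = A t
    rw [hDsnd t m w]
  have hπ := pi_pos
  have h2π : (1 : ℝ) / (2 * π) ≠ 0 := by positivity
  have hIA : ∫ t in (0:ℝ)..(2 * π), A t = 0 := by
    have h := hH3 m w
    rw [havgJ] at h
    rcases mul_eq_zero.mp h with h' | h'
    · exact absurd h' h2π
    · exact h'
  have hint : (∫ t in (0:ℝ)..(2 * π), A t)
      = 2 * π * fderiv ℝ J m v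
        - (1 / ω m) * (2 * π * fderiv ℝ H m v - ∫ t in (0:ℝ)..(2 * π), B t) := by
    rw [intervalIntegral.integral_congr
      (g := fun t => fderiv ℝ J m v - (1 / ω m) * (fderiv ℝ H m v - B t))
      (fun t _ => star t)]
    rw [intervalIntegral.integral_sub intervalIntegrable_const
        (show IntervalIntegrable (fun t => 1 / ω m * (fderiv ℝ H m v - B t)) volume 0 (2 * π) from
          (continuous_const.mul (continuous_const.sub hcB)).intervalIntegrable _ _),
      intervalIntegral.integral_const, intervalIntegral.integral_const_mul,
      intervalIntegral.integral_sub intervalIntegrable_const (hcB.intervalIntegrable _ _),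
      intervalIntegral.integral_const]
    simp only [smul_eq_mul, sub_zero]
  rw [hint] at hIA
  have hd1H : d1Form H m w = fderiv ℝ H m v := rfl
  have hd1J : d1Form J m w = fderiv ℝ J m v := rfl
  rw [havgH, hd1H, hd1J]
  set IB : ℝ := ∫ t in (0:ℝ)..(2 * π), B t with hIB
  have hωm := hωne m
  field_simp at hIA ⊢
  linear_combination (-1 : ℝ) * hIA
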